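/- Let G be a group generated by a subset S (i.e., Subgroup.closure S = ⊤) and let c ≥ 1. Then γ_c(G) is generated as a subgroup by γ_{c+1}(G) together with the left-normed iterated commutators [x₁, x₂, …, x_c] = [⋯[[x₁,x₂],x₃],…,x_c] with all xᵢ ∈ S; that is, γ_c(G) = Subgroup.closure (γ_{c+1}(G) ∪ {[x₁,…,x_c] | x₁,…,x_c ∈ S}). -/

import Mathlib

open scoped commutatorElement

/-- The left-normed iterated commutator `[x₁, x₂, …, x_c] = [⋯[[x₁,x₂],x₃],…,x_c]`
of a list of group elements (equal to `1` for the empty list). -/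
def leftNormedCommutator {G : Type*} [Group G] : List G → G
  | [] => 1
  | x :: xs => xs.foldl (fun a b => ⁅a, b⁆) x

private lemma lnc_cons {G : Type*} [Group G] (x : G) (xs : List G) :
    leftNormedCommutator (x :: xs) = xs.foldl (fun a b => ⁅a, b⁆) x := rfl

private lemma lnc_concat {G : Type*} [Group G] (x s : G) (xs : List G) :
    leftNormedCommutator ((x :: xs) ++ [s]) = ⁅leftNormedCommutator (x :: xs), s⁆ := by
  simp [lnc_cons, List.foldl_append]

private lemma lcs_succ' {G : Type*} [Group G] (n : ℕ) :
    (⊤ : Subgroup G).lowerCentralSeries (n + 1) = ⁅(⊤ : Subgroup G).lowerCentralSeries n, ⊤⁆ := rfl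

private lemma foldl_mem_lcs {G : Type*} [Group G] :
    ∀ (xs : List G) (a : G) (n : ℕ), a ∈ (⊤ : Subgroup G).lowerCentralSeries n →
      xs.foldl (fun a b => ⁅a, b⁆) a ∈ (⊤ : Subgroup G).lowerCentralSeries (n + xs.length)
  | [], a, n, ha => ha
  | b :: xs, a, n, ha => by
    have h1 : ⁅a, b⁆ ∈ (⊤ : Subgroup G).lowerCentralSeries (n + 1) := by
      rw [lcs_succ']
      exact Subgroup.commutator_mem_commutator ha (Subgroup.mem_top b)
    have := foldl_mem_lcs xs ⁅a, b⁆ (n + 1) h1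
    simpa [Nat.add_assoc, Nat.add_comm, Nat.add_left_comm] using this

private lemma lcs_map_surjective {G H : Type*} [Group G] [Group H] (f : G →* H)
    (hf : Function.Surjective f) (n : ℕ) :
    Subgroup.map f ((⊤ : Subgroup G).lowerCentralSeries n) = (⊤ : Subgroup H).lowerCentralSeries n := by
  induction n with
  | zero => simpa using Subgroup.map_top_of_surjective f hf
  | succ n ih =>
    rw [lcs_succ', lcs_succ', Subgroup.map_commutator, ih,
      Subgroup.map_top_of_surjective f hf]

/-- Central bilinearity of commutators on generators. -/
private lemma commutator_mem_of_central {Q : Type*} [Group Q] (A B : Set Q) (K : Subgroup Q)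
    (h : ∀ a ∈ A, ∀ b ∈ B, ⁅a, b⁆ ∈ K ⊓ Subgroup.center Q) :
    ∀ x ∈ Subgroup.closure A, ∀ y ∈ Subgroup.closure B, ⁅x, y⁆ ∈ K ⊓ Subgroup.center Q := by
  have key : ∀ a ∈ A, ∀ y ∈ Subgroup.closure B, ⁅a, y⁆ ∈ K ⊓ Subgroup.center Q := by
    intro a ha y hy
    induction hy using Subgroup.closure_induction with
    | mem b hb => exact h a ha b hb
    | one => simpa using (K ⊓ Subgroup.center Q).one_mem
    | mul y₁ y₂ hy₁ hy₂ ih₁ ih₂ =>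
      have hz : y₁ * ⁅a, y₂⁆ * y₁⁻¹ = ⁅a, y₂⁆ := by
        have := Subgroup.mem_center_iff.mp ih₂.2 y₁
        rw [this]; group
      have heq : ⁅a, y₁ * y₂⁆ = ⁅a, y₁⁆ * (y₁ * ⁅a, y₂⁆ * y₁⁻¹) := by
        simp only [commutatorElement_def]; group
      rw [heq, hz]
      exact mul_mem ih₁ ih₂
    | inv y hy ih =>
      have hz : y⁻¹ * ⁅a, y⁆⁻¹ * y = ⁅a, y⁆⁻¹ := by
        have h2 : y * ⁅a, y⁆⁻¹ = ⁅a, y⁆⁻¹ * y :=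
          Subgroup.mem_center_iff.mp (inv_mem ih.2) y
        rw [mul_assoc, ← h2]; group
      have heq : ⁅a, y⁻¹⁆ = y⁻¹ * ⁅a, y⁆⁻¹ * y := by
        simp only [commutatorElement_def]; group
      rw [heq, hz]
      exact inv_mem ih
  intro x hx y hy
  induction hx using Subgroup.closure_induction with
  | mem a ha => exact key a ha y hy
  | one => simpa using (K ⊓ Subgroup.center Q).one_mem
  | mul x₁ x₂ hx₁ hx₂ ih₁ ih₂ =>
    have hz : x₁ * ⁅x₂, y⁆ * x₁⁻¹ = ⁅x₂, y⁆ := by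
      have := Subgroup.mem_center_iff.mp ih₂.2 x₁
      rw [this]; group
    have heq : ⁅x₁ * x₂, y⁆ = (x₁ * ⁅x₂, y⁆ * x₁⁻¹) * ⁅x₁, y⁆ := by
      simp only [commutatorElement_def]; group
    rw [heq, hz]
    exact mul_mem ih₂ ih₁
  | inv x hx ih =>
    have hz : x⁻¹ * ⁅x, y⁆⁻¹ * x = ⁅x, y⁆⁻¹ := by
      have h2 : x * ⁅x, y⁆⁻¹ = ⁅x, y⁆⁻¹ * x :=
        Subgroup.mem_center_iff.mp (inv_mem ih.2) x
      rw [mul_assoc, ← h2]; group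
    have heq : ⁅x⁻¹, y⁆ = x⁻¹ * ⁅x, y⁆⁻¹ * x := by
      simp only [commutatorElement_def]; group
    rw [heq, hz]
    exact inv_mem ih

/-- If `G` is generated by `S`, then `γ_c(G)` is generated by `γ_{c+1}(G)`
together with the left-normed iterated commutators of length `c` with entries
in `S`.  (Here `γ_k(G) = (⊤ : Subgroup G).lowerCentralSeries (k - 1)`.) -/
theorem lowerCentralSeries_eq_closure_iterated_commutators {G : Type*} [Group G]
    (S : Set G) (hS : Subgroup.closure S = ⊤) (c : ℕ) (hc : 1 ≤ c) :
    (⊤ : Subgroup G).lowerCentralSeries (c - 1) =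
      Subgroup.closure (((⊤ : Subgroup G).lowerCentralSeries c : Set G) ∪
        {g | ∃ l : List G, l.length = c ∧ (∀ x ∈ l, x ∈ S) ∧
          g = leftNormedCommutator l}) := by
  induction c, hc using Nat.le_induction with
  | base =>
    rw [Nat.sub_self, Subgroup.lowerCentralSeries_zero, eq_comm, eq_top_iff, ← hS,
      Subgroup.closure_le]
    intro x hx
    exact Subgroup.subset_closure (Or.inr ⟨[x], rfl, by simpa using hx, rfl⟩)
  | succ c hc IH =>
    rw [Nat.add_sub_cancel]
    set C : Set G := {g | ∃ l : List G, l.length = c + 1 ∧ (∀ x ∈ l, x ∈ S) ∧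
        g = leftNormedCommutator l} with hC
    apply le_antisymm
    · -- hard direction
      set N := (⊤ : Subgroup G).lowerCentralSeries (c + 1) with hN
      let π : G →* G ⧸ N := QuotientGroup.mk' N
      have hsurj : Function.Surjective π := QuotientGroup.mk'_surjective N
      have hker : π.ker = N := QuotientGroup.ker_mk' N
      have hmap : ∀ n, Subgroup.map π ((⊤ : Subgroup G).lowerCentralSeries n) =
          (⊤ : Subgroup (G ⧸ N)).lowerCentralSeries n := lcs_map_surjective π hsurj
      have hbot : (⊤ : Subgroup (G ⧸ N)).lowerCentralSeries (c + 1) = ⊥ := by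
        rw [← hmap]
        exact (Subgroup.map_eq_bot_iff _).mpr hker.ge
      have hcentral : (⊤ : Subgroup (G ⧸ N)).lowerCentralSeries c ≤ Subgroup.center (G ⧸ N) := by
        intro z hz
        rw [Subgroup.mem_center_iff]
        intro g
        have : ⁅z, g⁆ ∈ (⊤ : Subgroup (G ⧸ N)).lowerCentralSeries (c + 1) := by
          rw [lcs_succ']
          exact Subgroup.commutator_mem_commutator hz (Subgroup.mem_top g)
        rw [hbot, Subgroup.mem_bot, commutatorElement_eq_one_iff_mul_comm] at this
        exact this.symm
      -- description of γ_c(G⧸N) as a closure, from the induction hypothesis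
      set A : Set (G ⧸ N) := π '' (((⊤ : Subgroup G).lowerCentralSeries c : Set G) ∪
          {g | ∃ l : List G, l.length = c ∧ (∀ x ∈ l, x ∈ S) ∧
            g = leftNormedCommutator l}) with hA
      have hAc : Subgroup.closure A = (⊤ : Subgroup (G ⧸ N)).lowerCentralSeries (c - 1) := by
        rw [hA, ← MonoidHom.map_closure, ← IH, hmap]
      have hBtop : Subgroup.closure (π '' S) = ⊤ := by
        rw [← MonoidHom.map_closure, hS, Subgroup.map_top_of_surjective π hsurj]
      set K : Subgroup (G ⧸ N) := Subgroup.closure (π '' C) with hK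
      -- generator commutators lie in K ⊓ center
      have hgen : ∀ a ∈ A, ∀ b ∈ π '' S, ⁅a, b⁆ ∈ K ⊓ Subgroup.center (G ⧸ N) := by
        rintro a ha b hb
        have hacl : a ∈ (⊤ : Subgroup (G ⧸ N)).lowerCentralSeries (c - 1) :=
          hAc ▸ Subgroup.subset_closure ha
        have hcen : ⁅a, b⁆ ∈ Subgroup.center (G ⧸ N) := by
          apply hcentral
          have : ⁅a, b⁆ ∈ (⊤ : Subgroup (G ⧸ N)).lowerCentralSeries (c - 1 + 1) := by
            rw [lcs_succ']
            exact Subgroup.commutator_mem_commutator hacl (Subgroup.mem_top b)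
          rwa [Nat.sub_add_cancel hc] at this
        refine ⟨?_, hcen⟩
        obtain ⟨a', ha', rfl⟩ := ha
        obtain ⟨s, hs, rfl⟩ := hb
        rcases ha' with ha' | ⟨l, hl, hlS, rfl⟩
        · -- a' ∈ γ_{c+1}(G) : then π a' is central, commutator is 1
          have ha'' : a' ∈ (⊤ : Subgroup G).lowerCentralSeries c := ha'
          have : (π a' : G ⧸ N) ∈ Subgroup.center (G ⧸ N) := by
            apply hcentral
            rw [← hmap]
            exact Subgroup.mem_map_of_mem π ha''
          have : ⁅π a', π s⁆ = 1 :=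
            commutatorElement_eq_one_iff_mul_comm.mpr
              ((Subgroup.mem_center_iff.mp this (π s)).symm)
          rw [this]; exact Subgroup.one_mem K
        · -- a' is a length-c iterated commutator of elements of S
          have hlne : l ≠ [] := by rintro rfl; simp at hl; omega
          obtain ⟨x, xs, rfl⟩ := List.exists_cons_of_ne_nil hlne
          have : ⁅π (leftNormedCommutator (x :: xs)), π s⁆ =
              π (leftNormedCommutator ((x :: xs) ++ [s])) := by
            rw [lnc_concat, map_commutatorElement]
          rw [this]
          apply Subgroup.subset_closure
          refine ⟨leftNormedCommutator ((x :: xs) ++ [s]), ⟨(x :: xs) ++ [s], ?_, ?_, rfl⟩, rfl⟩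
          · simpa using hl
          · intro y hy
            rcases List.mem_append.mp hy with hy | hy
            · exact hlS y hy
            · simpa using (List.mem_singleton.mp hy) ▸ hs
      -- γ_c(G⧸N) ≤ K
      have hQle : (⊤ : Subgroup (G ⧸ N)).lowerCentralSeries c ≤ K := by
        have h5 : (⊤ : Subgroup (G ⧸ N)).lowerCentralSeries (c - 1 + 1) ≤ K := by
          rw [lcs_succ', ← hAc, ← hBtop, Subgroup.commutator_le]
          intro g₁ h₁ g₂ h₂
          exact (commutator_mem_of_central A (π '' S) K hgen g₁ h₁ g₂ h₂).1
        rwa [Nat.sub_add_cancel hc] at h5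
      -- pull back
      intro x hx
      have hπx : π x ∈ K := by
        apply hQle
        rw [← hmap]
        exact Subgroup.mem_map_of_mem π hx
      have : x ∈ Subgroup.comap π (Subgroup.map π (Subgroup.closure C)) := by
        rw [Subgroup.mem_comap, MonoidHom.map_closure]
        exact hπx
      rw [Subgroup.comap_map_eq, hker] at this
      refine (sup_le ?_ ?_ : Subgroup.closure C ⊔ N ≤ _) this
      · exact Subgroup.closure_mono Set.subset_union_right
      · intro n hn
        exact Subgroup.subset_closure (Or.inl hn)
    · -- easy direction
      rw [Subgroup.closure_le]
      rintro x (hx | ⟨l, hl, hlS, rfl⟩)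
      · exact Subgroup.lowerCentralSeries_antitone ⊤ (Nat.le_succ c) hx
      · have hlne : l ≠ [] := by rintro rfl; simp at hl
        obtain ⟨a, xs, rfl⟩ := List.exists_cons_of_ne_nil hlne
        have := foldl_mem_lcs xs a 0 (by simp [Subgroup.lowerCentralSeries_zero])
        rw [lnc_cons]
        simp only [List.length_cons] at hl
        have hxs : xs.length = c := by omega
        simpa [hxs] using this
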